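/- Let n be even with n > 7, let γ = (2, 3, 5, 4) and δ = (2, 3, ..., n) be permutations of {1, ..., n}, and set ρ = δγδ⁻¹γδ⁻¹γ⁻¹δγ⁻¹. Then the three permutations (δγ⁻¹)², ρ, and (γδ⁻¹)⁻¹ρ(γδ⁻¹) generate the alternating group on {2, ..., n}. -/

import Mathlib

open Fin.NatCast

open Equiv Equiv.Perm

variable {α : Type*} [DecidableEq α]

/-- the 3-cycle `a ↦ b ↦ c ↦ a`. -/
def stmt6cyc (a b c : α) : Equiv.Perm α := Equiv.swap a b * Equiv.swap b c

theorem stmt6cyc_left {a b c : α} (hab : a ≠ b) (hac : a ≠ c) :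
    stmt6cyc a b c a = b := by
  simp [stmt6cyc, Equiv.swap_apply_of_ne_of_ne hab hac]

theorem stmt6cyc_mid {a b c : α} (hca : c ≠ a) (hcb : c ≠ b) :
    stmt6cyc a b c b = c := by
  simp [stmt6cyc, Equiv.swap_apply_of_ne_of_ne hca hcb]

theorem stmt6cyc_right {a b c : α} : stmt6cyc a b c c = a := by
  simp [stmt6cyc]

theorem stmt6cyc_fix {a b c x : α} (hxa : x ≠ a) (hxb : x ≠ b) (hxc : x ≠ c) :
    stmt6cyc a b c x = x := by
  simp [stmt6cyc, Equiv.swap_apply_of_ne_of_ne, hxa, hxb, hxc]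

theorem stmt6cyc_conj (g : Equiv.Perm α) (a b c : α) :
    g * stmt6cyc a b c * g⁻¹ = stmt6cyc (g a) (g b) (g c) := by
  unfold stmt6cyc
  rw [Equiv.swap_apply_apply, Equiv.swap_apply_apply]
  group

theorem stmt6cyc_rotate {a b c : α} (hab : a ≠ b) (hbc : b ≠ c) (hca : c ≠ a) :
    stmt6cyc a b c = stmt6cyc b c a := by
  ext x
  simp only [stmt6cyc, Equiv.Perm.mul_apply, Equiv.swap_apply_def]
  split_ifs <;> simp_all <;> tauto

theorem stmt6cyc_inv {a b c : α} (hab : a ≠ b) (hbc : b ≠ c) (hca : c ≠ a) :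
    (stmt6cyc a b c)⁻¹ = stmt6cyc a c b := by
  rw [inv_eq_iff_mul_eq_one]
  ext x
  simp only [stmt6cyc, Equiv.Perm.mul_apply, Equiv.Perm.one_apply, Equiv.swap_apply_def]
  split_ifs <;> simp_all <;> tauto

theorem stmt6cyc_mul_inv {p q a b : α} (hpq : p ≠ q) (hpa : p ≠ a) (hpb : p ≠ b)
    (hqa : q ≠ a) (hqb : q ≠ b) (hab : a ≠ b) :
    stmt6cyc p q a * (stmt6cyc p q b)⁻¹ = stmt6cyc p b a := by
  rw [stmt6cyc_inv hpq hqb hpb.symm]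
  ext x
  simp only [Equiv.Perm.mul_apply]
  rcases eq_or_ne x p with rfl | hxp
  · rw [stmt6cyc_left hpb hpq, stmt6cyc_fix hpb.symm hqb.symm hab.symm, stmt6cyc_left hpb hpa]
  rcases eq_or_ne x b with rfl | hxb
  · rw [stmt6cyc_mid hpq.symm hqb, stmt6cyc_mid hpa.symm hqa.symm, stmt6cyc_mid hpa.symm hab]
  rcases eq_or_ne x a with rfl | hxa
  · rw [stmt6cyc_fix hpa.symm hab hqa.symm, stmt6cyc_right, stmt6cyc_right]
  rcases eq_or_ne x q with rfl | hxq
  · rw [stmt6cyc_right, stmt6cyc_left hpq hpa, stmt6cyc_fix hpq.symm hqb hqa]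
  · rw [stmt6cyc_fix hxp hxb hxq, stmt6cyc_fix hxp hxq hxa, stmt6cyc_fix hxp hxb hxa]

theorem stmt6_inv_apply {f : Equiv.Perm α} {x y : α} (h : f y = x) : f⁻¹ x = y := by
  rw [← h]; simp

theorem stmt6_threeCycle_ex [Fintype α] {σ : Equiv.Perm α} (h : σ.IsThreeCycle) :
    ∃ a b c, a ≠ b ∧ b ≠ c ∧ c ≠ a ∧ σ = stmt6cyc a b c := by
  have h3 : σ.support.card = 3 := h.card_support
  obtain ⟨a, ha⟩ : σ.support.Nonempty := Finset.card_pos.mp (by omega)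
  have hab : a ≠ σ a := (Equiv.Perm.mem_support.mp ha).symm
  have hb : σ a ∈ σ.support := Equiv.Perm.apply_mem_support.mpr ha
  have hbc : σ a ≠ σ (σ a) := (Equiv.Perm.mem_support.mp hb).symm
  have hc : σ (σ a) ∈ σ.support := Equiv.Perm.apply_mem_support.mpr hb
  have hcube : σ (σ (σ a)) = a := by
    have h1 : σ ^ 3 = 1 := by rw [← h.orderOf]; exact pow_orderOf_eq_one σ
    have : (σ ^ 3) a = a := by rw [h1]; rfl
    simpa [pow_succ, Equiv.Perm.mul_apply] using this
  have hca : σ (σ a) ≠ a := by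
    intro he
    have : σ (σ (σ a)) = σ a := by rw [he]
    rw [hcube] at this
    exact hab this
  refine ⟨a, σ a, σ (σ a), hab, hbc, hca, ?_⟩
  have hcard : ({a, σ a, σ (σ a)} : Finset α).card = 3 := by
    rw [Finset.card_insert_of_notMem (by simp [hab, hca.symm]), Finset.card_insert_of_notMem (by simp [hbc]),
      Finset.card_singleton]
  have hsupp : σ.support = {a, σ a, σ (σ a)} := by
    refine (Finset.eq_of_subset_of_card_le ?_ (by rw [h3, hcard])).symm
    intro x hx
    simp only [Finset.mem_insert, Finset.mem_singleton] at hx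
    rcases hx with rfl | rfl | rfl
    · exact ha
    · exact hb
    · exact hc
  ext x
  rcases eq_or_ne x a with rfl | hxa
  · rw [stmt6cyc_left hab (Ne.symm hca)]
  rcases eq_or_ne x (σ a) with rfl | hxb
  · rw [stmt6cyc_mid hca hbc.symm]
  rcases eq_or_ne x (σ (σ a)) with rfl | hxc
  · rw [stmt6cyc_right, hcube]
  · rw [stmt6cyc_fix hxa hxb hxc]
    refine Equiv.Perm.notMem_support.mp ?_
    rw [hsupp]
    simp [hxa, hxb, hxc]

set_option maxHeartbeats 1000000

/-- `n` even, `n > 7`, `γ = (2, 3, 5, 4)`, `δ = (2, 3, ..., n)` on `{1, ..., n}`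
(realized in `Equiv.Perm (Fin (n+1))`, the point `0` unused), and
`ρ = δγδ⁻¹γδ⁻¹γ⁻¹δγ⁻¹` (composing left-to-right, so a word `x₁⋯x_k` is the Lean
product `x_k * ⋯ * x₁`). Then `(δγ⁻¹)²`, `ρ`, `(γδ⁻¹)⁻¹ρ(γδ⁻¹)` generate the
alternating group on `{2, ..., n}`. -/
theorem stmt6 (n : ℕ) (hn : 7 < n) (heven : Even n)
    (γ δ : Equiv.Perm (Fin (n + 1)))
    (hγ₁ : γ 2 = 3) (hγ₂ : γ 3 = 5) (hγ₃ : γ 5 = 4) (hγ₄ : γ 4 = 2)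
    (hγ₅ : ∀ x : Fin (n + 1), x ∉ ({2, 3, 4, 5} : Set (Fin (n + 1))) → γ x = x)
    (hδ₁ : ∀ i : ℕ, 2 ≤ i → i < n → δ (i : Fin (n + 1)) = ((i + 1 : ℕ) : Fin (n + 1)))
    (hδ₂ : δ (n : Fin (n + 1)) = 2)
    (hδ₃ : ∀ x : Fin (n + 1), x.val < 2 → δ x = x)
    (σ : Equiv.Perm (Fin (n + 1))) :
    σ ∈ Subgroup.closure
      ({(γ⁻¹ * δ) ^ 2,
        γ⁻¹ * δ * γ⁻¹ * δ⁻¹ * γ * δ⁻¹ * γ * δ,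
        (δ⁻¹ * γ) * (γ⁻¹ * δ * γ⁻¹ * δ⁻¹ * γ * δ⁻¹ * γ * δ) * (δ⁻¹ * γ)⁻¹} :
        Set (Equiv.Perm (Fin (n + 1)))) ↔
    (Equiv.Perm.sign σ = 1 ∧ ∀ x : Fin (n + 1), x.val < 2 → σ x = x) := by
  have hn8 : 8 ≤ n := by omega
  -- cast basics
  have hEv : ∀ i : ℕ, i ≤ n → ((i : Fin (n + 1))).val = i := fun i hi =>
    Fin.val_cast_of_lt (by omega)
  have hEne : ∀ i j : ℕ, i ≤ n → j ≤ n → i ≠ j → (i : Fin (n + 1)) ≠ (j : Fin (n + 1)) := by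
    intro i j hi hj hij h
    exact hij (by rw [← hEv i hi, ← hEv j hj, h])
  have hself : ∀ x : Fin (n + 1), ((x.val : ℕ) : Fin (n + 1)) = x := Fin.cast_val_eq_self
  have e2 : ((2 : ℕ) : Fin (n + 1)) = 2 := by norm_cast
  have e3 : ((3 : ℕ) : Fin (n + 1)) = 3 := by norm_cast
  have e4 : ((4 : ℕ) : Fin (n + 1)) = 4 := by norm_cast
  have e5 : ((5 : ℕ) : Fin (n + 1)) = 5 := by norm_cast
  -- γ table
  have hg2 : γ ((2 : ℕ) : Fin (n + 1)) = ((3 : ℕ) : Fin (n + 1)) := by rw [e2, e3]; exact hγ₁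
  have hg3 : γ ((3 : ℕ) : Fin (n + 1)) = ((5 : ℕ) : Fin (n + 1)) := by rw [e3, e5]; exact hγ₂
  have hg5 : γ ((5 : ℕ) : Fin (n + 1)) = ((4 : ℕ) : Fin (n + 1)) := by rw [e5, e4]; exact hγ₃
  have hg4 : γ ((4 : ℕ) : Fin (n + 1)) = ((2 : ℕ) : Fin (n + 1)) := by rw [e4, e2]; exact hγ₄
  have hgfix : ∀ i : ℕ, i ≤ n → i ≠ 2 → i ≠ 3 → i ≠ 4 → i ≠ 5 →
      γ ((i : ℕ) : Fin (n + 1)) = ((i : ℕ) : Fin (n + 1)) := by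
    intro i hi h2 h3 h4 h5
    apply hγ₅
    simp only [Set.mem_insert_iff, Set.mem_singleton_iff, ← e2, ← e3, ← e4, ← e5]
    push_neg
    exact ⟨hEne i 2 hi (by omega) h2, hEne i 3 hi (by omega) h3,
      hEne i 4 hi (by omega) h4, hEne i 5 hi (by omega) h5⟩
  -- γ⁻¹ table
  have hgi3 : γ⁻¹ ((3 : ℕ) : Fin (n + 1)) = ((2 : ℕ) : Fin (n + 1)) := stmt6_inv_apply hg2
  have hgi5 : γ⁻¹ ((5 : ℕ) : Fin (n + 1)) = ((3 : ℕ) : Fin (n + 1)) := stmt6_inv_apply hg3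
  have hgi4 : γ⁻¹ ((4 : ℕ) : Fin (n + 1)) = ((5 : ℕ) : Fin (n + 1)) := stmt6_inv_apply hg5
  have hgi2 : γ⁻¹ ((2 : ℕ) : Fin (n + 1)) = ((4 : ℕ) : Fin (n + 1)) := stmt6_inv_apply hg4
  have hgifix : ∀ i : ℕ, i ≤ n → i ≠ 2 → i ≠ 3 → i ≠ 4 → i ≠ 5 →
      γ⁻¹ ((i : ℕ) : Fin (n + 1)) = ((i : ℕ) : Fin (n + 1)) := fun i hi h2 h3 h4 h5 =>
    stmt6_inv_apply (hgfix i hi h2 h3 h4 h5)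
  -- δ table
  have hd0 : δ ((0 : ℕ) : Fin (n + 1)) = ((0 : ℕ) : Fin (n + 1)) :=
    hδ₃ _ (by rw [hEv 0 (by omega)]; omega)
  have hd1 : δ ((1 : ℕ) : Fin (n + 1)) = ((1 : ℕ) : Fin (n + 1)) :=
    hδ₃ _ (by rw [hEv 1 (by omega)]; omega)
  have hdn : δ ((n : ℕ) : Fin (n + 1)) = ((2 : ℕ) : Fin (n + 1)) := by rw [e2]; exact hδ₂
  have hd2 : δ ((2 : ℕ) : Fin (n + 1)) = ((3 : ℕ) : Fin (n + 1)) := hδ₁ 2 (by omega) (by omega)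
  have hd3 : δ ((3 : ℕ) : Fin (n + 1)) = ((4 : ℕ) : Fin (n + 1)) := hδ₁ 3 (by omega) (by omega)
  have hd4 : δ ((4 : ℕ) : Fin (n + 1)) = ((5 : ℕ) : Fin (n + 1)) := hδ₁ 4 (by omega) (by omega)
  have hd5 : δ ((5 : ℕ) : Fin (n + 1)) = ((6 : ℕ) : Fin (n + 1)) := hδ₁ 5 (by omega) (by omega)
  have hd6 : δ ((6 : ℕ) : Fin (n + 1)) = ((7 : ℕ) : Fin (n + 1)) := hδ₁ 6 (by omega) (by omega)
  have hdn1 : δ ((n - 1 : ℕ) : Fin (n + 1)) = ((n : ℕ) : Fin (n + 1)) := by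
    have h := hδ₁ (n - 1) (by omega) (by omega)
    rwa [show n - 1 + 1 = n by omega] at h
  -- δ⁻¹ table
  have hdi0 : δ⁻¹ ((0 : ℕ) : Fin (n + 1)) = ((0 : ℕ) : Fin (n + 1)) := stmt6_inv_apply hd0
  have hdi1 : δ⁻¹ ((1 : ℕ) : Fin (n + 1)) = ((1 : ℕ) : Fin (n + 1)) := stmt6_inv_apply hd1
  have hdi2 : δ⁻¹ ((2 : ℕ) : Fin (n + 1)) = ((n : ℕ) : Fin (n + 1)) := stmt6_inv_apply hdn
  have hdi3 : δ⁻¹ ((3 : ℕ) : Fin (n + 1)) = ((2 : ℕ) : Fin (n + 1)) := stmt6_inv_apply hd2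
  have hdi4 : δ⁻¹ ((4 : ℕ) : Fin (n + 1)) = ((3 : ℕ) : Fin (n + 1)) := stmt6_inv_apply hd3
  have hdi5 : δ⁻¹ ((5 : ℕ) : Fin (n + 1)) = ((4 : ℕ) : Fin (n + 1)) := stmt6_inv_apply hd4
  have hdi6 : δ⁻¹ ((6 : ℕ) : Fin (n + 1)) = ((5 : ℕ) : Fin (n + 1)) := stmt6_inv_apply hd5
  have hdigen : ∀ j : ℕ, 3 ≤ j → j ≤ n →
      δ⁻¹ ((j : ℕ) : Fin (n + 1)) = ((j - 1 : ℕ) : Fin (n + 1)) := by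
    intro j h3 hj
    rcases eq_or_ne j n with rfl | hjn
    · have h := stmt6_inv_apply (hdn1)
      rwa [] at h
    · have h := stmt6_inv_apply (hδ₁ (j - 1) (by omega) (by omega))
      rwa [show j - 1 + 1 = j by omega] at h
  -- the three generators
  set aw := (γ⁻¹ * δ) ^ 2 with haw_def
  set rw' := γ⁻¹ * δ * γ⁻¹ * δ⁻¹ * γ * δ⁻¹ * γ * δ with hrw_def
  set qw := δ⁻¹ * γ with hqw_def
  -- a = (γ⁻¹δ)² table
  have happ : ∀ x : Fin (n + 1), aw x = γ⁻¹ (δ (γ⁻¹ (δ x))) := by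
    intro x; rw [haw_def, pow_two]; rfl
  have ha0 : aw ((0 : ℕ) : Fin (n + 1)) = ((0 : ℕ) : Fin (n + 1)) := by
    rw [happ, hd0, hgifix 0 (by omega) (by omega) (by omega) (by omega) (by omega), hd0,
      hgifix 0 (by omega) (by omega) (by omega) (by omega) (by omega)]
  have ha1 : aw ((1 : ℕ) : Fin (n + 1)) = ((1 : ℕ) : Fin (n + 1)) := by
    rw [happ, hd1, hgifix 1 (by omega) (by omega) (by omega) (by omega) (by omega), hd1,
      hgifix 1 (by omega) (by omega) (by omega) (by omega) (by omega)]
  have ha2 : aw ((2 : ℕ) : Fin (n + 1)) = ((2 : ℕ) : Fin (n + 1)) := by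
    rw [happ, hd2, hgi3, hd2, hgi3]
  have ha3 : aw ((3 : ℕ) : Fin (n + 1)) = ((6 : ℕ) : Fin (n + 1)) := by
    rw [happ, hd3, hgi4, hd5, hgifix 6 (by omega) (by omega) (by omega) (by omega) (by omega)]
  have ha4 : aw ((4 : ℕ) : Fin (n + 1)) = ((5 : ℕ) : Fin (n + 1)) := by
    rw [happ, hd4, hgi5, hd3, hgi4]
  have hamid : ∀ i : ℕ, 5 ≤ i → i ≤ n - 2 →
      aw ((i : ℕ) : Fin (n + 1)) = ((i + 2 : ℕ) : Fin (n + 1)) := by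
    intro i h5 hi
    rw [happ, hδ₁ i (by omega) (by omega),
      hgifix (i + 1) (by omega) (by omega) (by omega) (by omega) (by omega),
      hδ₁ (i + 1) (by omega) (by omega),
      hgifix (i + 2) (by omega) (by omega) (by omega) (by omega) (by omega)]
  have han1 : aw ((n - 1 : ℕ) : Fin (n + 1)) = ((4 : ℕ) : Fin (n + 1)) := by
    rw [happ, hdn1, hgifix n (by omega) (by omega) (by omega) (by omega) (by omega), hdn, hgi2]
  have han : aw ((n : ℕ) : Fin (n + 1)) = ((3 : ℕ) : Fin (n + 1)) := by
    rw [happ, hdn, hgi2, hd4, hgi5]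
  -- ρ table
  have hrapp : ∀ x : Fin (n + 1), rw' x = γ⁻¹ (δ (γ⁻¹ (δ⁻¹ (γ (δ⁻¹ (γ (δ x))))))) := by
    intro x; rw [hrw_def]; rfl
  have hr0 : rw' ((0 : ℕ) : Fin (n + 1)) = ((0 : ℕ) : Fin (n + 1)) := by
    have hgf := hgfix 0 (by omega) (by omega) (by omega) (by omega) (by omega)
    have hgif := hgifix 0 (by omega) (by omega) (by omega) (by omega) (by omega)
    rw [hrapp, hd0, hgf, hdi0, hgf, hdi0, hgif, hd0, hgif]
  have hr1 : rw' ((1 : ℕ) : Fin (n + 1)) = ((1 : ℕ) : Fin (n + 1)) := by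
    have hgf := hgfix 1 (by omega) (by omega) (by omega) (by omega) (by omega)
    have hgif := hgifix 1 (by omega) (by omega) (by omega) (by omega) (by omega)
    rw [hrapp, hd1, hgf, hdi1, hgf, hdi1, hgif, hd1, hgif]
  have hgn : γ ((n : ℕ) : Fin (n + 1)) = ((n : ℕ) : Fin (n + 1)) :=
    hgfix n (by omega) (by omega) (by omega) (by omega) (by omega)
  have hgin : γ⁻¹ ((n : ℕ) : Fin (n + 1)) = ((n : ℕ) : Fin (n + 1)) := stmt6_inv_apply hgn
  have hgn1 : γ ((n - 1 : ℕ) : Fin (n + 1)) = ((n - 1 : ℕ) : Fin (n + 1)) :=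
    hgfix (n - 1) (by omega) (by omega) (by omega) (by omega) (by omega)
  have hgin1 : γ⁻¹ ((n - 1 : ℕ) : Fin (n + 1)) = ((n - 1 : ℕ) : Fin (n + 1)) :=
    stmt6_inv_apply hgn1
  have hdin : δ⁻¹ ((n : ℕ) : Fin (n + 1)) = ((n - 1 : ℕ) : Fin (n + 1)) :=
    hdigen n (by omega) (by omega)
  have hr2 : rw' ((2 : ℕ) : Fin (n + 1)) = ((4 : ℕ) : Fin (n + 1)) := by
    rw [hrapp, hd2, hg3, hdi5, hg4, hdi2, hgin, hdn, hgi2]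
  have hr3 : rw' ((3 : ℕ) : Fin (n + 1)) = ((n : ℕ) : Fin (n + 1)) := by
    rw [hrapp, hd3, hg4, hdi2, hgn, hdin, hgin1, hdn1, hgin]
  have hr4 : rw' ((4 : ℕ) : Fin (n + 1)) = ((6 : ℕ) : Fin (n + 1)) := by
    rw [hrapp, hd4, hg5, hdi4, hg3, hdi5, hgi4, hd5,
      hgifix 6 (by omega) (by omega) (by omega) (by omega) (by omega)]
  have hr5 : rw' ((5 : ℕ) : Fin (n + 1)) = ((2 : ℕ) : Fin (n + 1)) := by
    rw [hrapp, hd5, hgfix 6 (by omega) (by omega) (by omega) (by omega) (by omega),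
      hdi6, hg5, hdi4, hgi3, hd2, hgi3]
  have hr6 : rw' ((6 : ℕ) : Fin (n + 1)) = ((5 : ℕ) : Fin (n + 1)) := by
    rw [hrapp, hd6, hgfix 7 (by omega) (by omega) (by omega) (by omega) (by omega),
      stmt6_inv_apply hd6, hgfix 6 (by omega) (by omega) (by omega) (by omega) (by omega),
      hdi6, hgi5, hd3, hgi4]
  have hrmid : ∀ i : ℕ, 7 ≤ i → i ≤ n - 1 →
      rw' ((i : ℕ) : Fin (n + 1)) = ((i : ℕ) : Fin (n + 1)) := by
    intro i h7 hi
    have h1 := hδ₁ i (by omega) (by omega)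
    rw [hrapp, h1, hgfix (i + 1) (by omega) (by omega) (by omega) (by omega) (by omega),
      stmt6_inv_apply h1, hgfix i (by omega) (by omega) (by omega) (by omega) (by omega),
      hdigen i (by omega) (by omega),
      hgifix (i - 1) (by omega) (by omega) (by omega) (by omega) (by omega)]
    have h2 := hδ₁ (i - 1) (by omega) (by omega)
    rw [show i - 1 + 1 = i by omega] at h2
    rw [h2, hgifix i (by omega) (by omega) (by omega) (by omega) (by omega)]
  have hrn : rw' ((n : ℕ) : Fin (n + 1)) = ((3 : ℕ) : Fin (n + 1)) := by
    rw [hrapp, hdn, hg2, hdi3, hg2, hdi3, hgi2, hd4, hgi5]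
  -- q table
  have hqapp : ∀ x : Fin (n + 1), qw x = δ⁻¹ (γ x) := fun x => rfl
  have hq0 : qw ((0 : ℕ) : Fin (n + 1)) = ((0 : ℕ) : Fin (n + 1)) := by
    rw [hqapp, hgfix 0 (by omega) (by omega) (by omega) (by omega) (by omega), hdi0]
  have hq1 : qw ((1 : ℕ) : Fin (n + 1)) = ((1 : ℕ) : Fin (n + 1)) := by
    rw [hqapp, hgfix 1 (by omega) (by omega) (by omega) (by omega) (by omega), hdi1]
  have hq2 : qw ((2 : ℕ) : Fin (n + 1)) = ((2 : ℕ) : Fin (n + 1)) := by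
    rw [hqapp, hg2, hdi3]
  have hq3 : qw ((3 : ℕ) : Fin (n + 1)) = ((4 : ℕ) : Fin (n + 1)) := by
    rw [hqapp, hg3, hdi5]
  have hq4 : qw ((4 : ℕ) : Fin (n + 1)) = ((n : ℕ) : Fin (n + 1)) := by
    rw [hqapp, hg4, hdi2]
  have hq5 : qw ((5 : ℕ) : Fin (n + 1)) = ((3 : ℕ) : Fin (n + 1)) := by
    rw [hqapp, hg5, hdi4]
  have hqmid : ∀ i : ℕ, 6 ≤ i → i ≤ n →
      qw ((i : ℕ) : Fin (n + 1)) = ((i - 1 : ℕ) : Fin (n + 1)) := by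
    intro i h6 hi
    rw [hqapp, hgfix i (by omega) (by omega) (by omega) (by omega) (by omega),
      hdigen i (by omega) (by omega)]
  -- q⁻¹ table
  have hqi0 : qw⁻¹ ((0 : ℕ) : Fin (n + 1)) = ((0 : ℕ) : Fin (n + 1)) := stmt6_inv_apply hq0
  have hqi1 : qw⁻¹ ((1 : ℕ) : Fin (n + 1)) = ((1 : ℕ) : Fin (n + 1)) := stmt6_inv_apply hq1
  have hqi2 : qw⁻¹ ((2 : ℕ) : Fin (n + 1)) = ((2 : ℕ) : Fin (n + 1)) := stmt6_inv_apply hq2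
  have hqi4 : qw⁻¹ ((4 : ℕ) : Fin (n + 1)) = ((3 : ℕ) : Fin (n + 1)) := stmt6_inv_apply hq3
  have hqin : qw⁻¹ ((n : ℕ) : Fin (n + 1)) = ((4 : ℕ) : Fin (n + 1)) := stmt6_inv_apply hq4
  have hqi3 : qw⁻¹ ((3 : ℕ) : Fin (n + 1)) = ((5 : ℕ) : Fin (n + 1)) := stmt6_inv_apply hq5
  have hqimid : ∀ j : ℕ, 5 ≤ j → j ≤ n - 1 →
      qw⁻¹ ((j : ℕ) : Fin (n + 1)) = ((j + 1 : ℕ) : Fin (n + 1)) := by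
    intro j h5 hj
    have h := stmt6_inv_apply (hqmid (j + 1) (by omega) (by omega))
    rwa [show j + 1 - 1 = j by omega] at h
  -- c table
  have hcapp : ∀ x : Fin (n + 1), (qw * rw' * qw⁻¹) x = qw (rw' (qw⁻¹ x)) := fun x => rfl
  have hc0 : (qw * rw' * qw⁻¹) ((0 : ℕ) : Fin (n + 1)) = ((0 : ℕ) : Fin (n + 1)) := by
    rw [hcapp, hqi0, hr0, hq0]
  have hc1 : (qw * rw' * qw⁻¹) ((1 : ℕ) : Fin (n + 1)) = ((1 : ℕ) : Fin (n + 1)) := by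
    rw [hcapp, hqi1, hr1, hq1]
  have hc2 : (qw * rw' * qw⁻¹) ((2 : ℕ) : Fin (n + 1)) = ((n : ℕ) : Fin (n + 1)) := by
    rw [hcapp, hqi2, hr2, hq4]
  have hc3 : (qw * rw' * qw⁻¹) ((3 : ℕ) : Fin (n + 1)) = ((2 : ℕ) : Fin (n + 1)) := by
    rw [hcapp, hqi3, hr5, hq2]
  have hc4 : (qw * rw' * qw⁻¹) ((4 : ℕ) : Fin (n + 1)) = ((n - 1 : ℕ) : Fin (n + 1)) := by
    rw [hcapp, hqi4, hr3, hqmid n (by omega) (by omega)]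
  have hc5 : (qw * rw' * qw⁻¹) ((5 : ℕ) : Fin (n + 1)) = ((3 : ℕ) : Fin (n + 1)) := by
    rw [hcapp, hqimid 5 (by omega) (by omega), hr6, hq5]
  have hc6 : (qw * rw' * qw⁻¹) ((6 : ℕ) : Fin (n + 1)) = ((6 : ℕ) : Fin (n + 1)) := by
    have h := hqmid 7 (by omega) (by omega)
    rw [hcapp, hqimid 6 (by omega) (by omega), hrmid 7 (by omega) (by omega), h]
  have hcmid : ∀ i : ℕ, 7 ≤ i → i ≤ n - 2 →
      (qw * rw' * qw⁻¹) ((i : ℕ) : Fin (n + 1)) = ((i : ℕ) : Fin (n + 1)) := by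
    intro i h7 hi
    have h := hqmid (i + 1) (by omega) (by omega)
    rw [show i + 1 - 1 = i by omega] at h
    rw [hcapp, hqimid i (by omega) (by omega), hrmid (i + 1) (by omega) (by omega), h]
  have hcn1 : (qw * rw' * qw⁻¹) ((n - 1 : ℕ) : Fin (n + 1)) = ((4 : ℕ) : Fin (n + 1)) := by
    have h := hqimid (n - 1) (by omega) (by omega)
    rw [show n - 1 + 1 = n by omega] at h
    rw [hcapp, h, hrn, hq3]
  have hcn : (qw * rw' * qw⁻¹) ((n : ℕ) : Fin (n + 1)) = ((5 : ℕ) : Fin (n + 1)) := by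
    have h := hqmid 6 (by omega) (by omega)
    rw [hcapp, hqin, hr4, h]
  -- t0 = ρ c² is the 3-cycle (4 6 5)
  have ht0 : rw' * (qw * rw' * qw⁻¹) * (qw * rw' * qw⁻¹) =
      stmt6cyc ((4 : ℕ) : Fin (n + 1)) ((6 : ℕ) : Fin (n + 1)) ((5 : ℕ) : Fin (n + 1)) := by
    apply Equiv.ext
    intro x
    obtain ⟨i, hi, rfl⟩ : ∃ i, i ≤ n ∧ x = ((i : ℕ) : Fin (n + 1)) :=
      ⟨x.val, Fin.is_le x, (hself x).symm⟩
    show rw' ((qw * rw' * qw⁻¹) ((qw * rw' * qw⁻¹) ((i : ℕ) : Fin (n + 1)))) = _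
    rcases Nat.lt_or_ge i 7 with h7 | h7
    · interval_cases i
      · rw [hc0, hc0, hr0,
          stmt6cyc_fix (hEne 0 4 (by omega) (by omega) (by omega))
            (hEne 0 6 (by omega) (by omega) (by omega)) (hEne 0 5 (by omega) (by omega) (by omega))]
      · rw [hc1, hc1, hr1,
          stmt6cyc_fix (hEne 1 4 (by omega) (by omega) (by omega))
            (hEne 1 6 (by omega) (by omega) (by omega)) (hEne 1 5 (by omega) (by omega) (by omega))]
      · rw [hc2, hcn, hr5,
          stmt6cyc_fix (hEne 2 4 (by omega) (by omega) (by omega))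
            (hEne 2 6 (by omega) (by omega) (by omega)) (hEne 2 5 (by omega) (by omega) (by omega))]
      · rw [hc3, hc2, hrn,
          stmt6cyc_fix (hEne 3 4 (by omega) (by omega) (by omega))
            (hEne 3 6 (by omega) (by omega) (by omega)) (hEne 3 5 (by omega) (by omega) (by omega))]
      · rw [hc4, hcn1, hr4,
          stmt6cyc_left (hEne 4 6 (by omega) (by omega) (by omega))
            (hEne 4 5 (by omega) (by omega) (by omega))]
      · rw [hc5, hc3, hr2, stmt6cyc_right]
      · rw [hc6, hc6, hr6,
          stmt6cyc_mid (hEne 5 4 (by omega) (by omega) (by omega))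
            (hEne 5 6 (by omega) (by omega) (by omega))]
    · rcases eq_or_ne i n with hieq | hin
      · rw [hieq, hcn, hc5, hr3,
          stmt6cyc_fix (hEne n 4 (by omega) (by omega) (by omega))
            (hEne n 6 (by omega) (by omega) (by omega)) (hEne n 5 (by omega) (by omega) (by omega))]
      rcases eq_or_ne i (n - 1) with hieq | hin1
      · rw [hieq, hcn1, hc4, hrmid (n - 1) (by omega) (by omega),
          stmt6cyc_fix (hEne (n - 1) 4 (by omega) (by omega) (by omega))
            (hEne (n - 1) 6 (by omega) (by omega) (by omega))
            (hEne (n - 1) 5 (by omega) (by omega) (by omega))]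
      · rw [hcmid i (by omega) (by omega), hcmid i (by omega) (by omega),
          hrmid i (by omega) (by omega),
          stmt6cyc_fix (hEne i 4 (by omega) (by omega) (by omega))
            (hEne i 6 (by omega) (by omega) (by omega)) (hEne i 5 (by omega) (by omega) (by omega))]
  -- membership bookkeeping
  set G := Subgroup.closure ({aw, rw', qw * rw' * qw⁻¹} : Set (Equiv.Perm (Fin (n + 1)))) with hG_def
  have hawG : aw ∈ G := Subgroup.subset_closure (Set.mem_insert _ _)
  have hrG : rw' ∈ G := Subgroup.subset_closure (Set.mem_insert_of_mem _ (Set.mem_insert _ _))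
  have hcG : qw * rw' * qw⁻¹ ∈ G :=
    Subgroup.subset_closure (Set.mem_insert_of_mem _ (Set.mem_insert_of_mem _ rfl))
  have hconjG : ∀ g : Equiv.Perm (Fin (n + 1)), g ∈ G → ∀ u v w : Fin (n + 1),
      stmt6cyc u v w ∈ G → stmt6cyc (g u) (g v) (g w) ∈ G := by
    intro g hg u v w h
    rw [← stmt6cyc_conj]
    exact mul_mem (mul_mem hg h) (inv_mem hg)
  have ht0G : stmt6cyc ((4 : ℕ) : Fin (n + 1)) ((6 : ℕ) : Fin (n + 1)) ((5 : ℕ) : Fin (n + 1)) ∈ G :=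
    ht0 ▸ mul_mem (mul_mem hrG hcG) hcG
  have hu0G : stmt6cyc ((2 : ℕ) : Fin (n + 1)) ((6 : ℕ) : Fin (n + 1)) ((5 : ℕ) : Fin (n + 1)) ∈ G := by
    have h := hconjG rw' hrG _ _ _ ht0G
    rw [hr4, hr6, hr5] at h
    rwa [stmt6cyc_rotate (hEne 2 6 (by omega) (by omega) (by omega))
      (hEne 6 5 (by omega) (by omega) (by omega)) (hEne 5 2 (by omega) (by omega) (by omega))]
  obtain ⟨m2, hm2⟩ := heven
  -- the chain of three cycles
  have hchain : ∀ k : ℕ, 1 ≤ k → 2 * k + 6 ≤ n →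
      stmt6cyc ((2 * k + 3 : ℕ) : Fin (n + 1)) ((2 * k + 6 : ℕ) : Fin (n + 1))
        ((2 * k + 5 : ℕ) : Fin (n + 1)) ∈ G := by
    intro k
    induction k with
    | zero => intro h1 _; exact absurd h1 (by omega)
    | succ m ih =>
      intro _ h2
      rcases Nat.eq_zero_or_pos m with rfl | hm
      · have h := hconjG aw hawG _ _ _ ht0G
        rw [ha4, hamid 6 (by omega) (by omega), hamid 5 (by omega) (by omega)] at h
        rw [show ((2 * (0 + 1) + 3 : ℕ) : Fin (n + 1)) = ((5 : ℕ) : Fin (n + 1)) from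
            congrArg _ (by norm_num),
          show ((2 * (0 + 1) + 6 : ℕ) : Fin (n + 1)) = ((6 + 2 : ℕ) : Fin (n + 1)) from
            congrArg _ (by norm_num),
          show ((2 * (0 + 1) + 5 : ℕ) : Fin (n + 1)) = ((5 + 2 : ℕ) : Fin (n + 1)) from
            congrArg _ (by norm_num)]
        exact h
      · have h := hconjG aw hawG _ _ _ (ih (by omega) (by omega))
        rw [hamid (2 * m + 3) (by omega) (by omega), hamid (2 * m + 6) (by omega) (by omega),
          hamid (2 * m + 5) (by omega) (by omega)] at h
        rw [show ((2 * (m + 1) + 3 : ℕ) : Fin (n + 1)) = ((2 * m + 3 + 2 : ℕ) : Fin (n + 1)) from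
            congrArg _ (by ring_nf),
          show ((2 * (m + 1) + 6 : ℕ) : Fin (n + 1)) = ((2 * m + 6 + 2 : ℕ) : Fin (n + 1)) from
            congrArg _ (by ring_nf),
          show ((2 * (m + 1) + 5 : ℕ) : Fin (n + 1)) = ((2 * m + 5 + 2 : ℕ) : Fin (n + 1)) from
            congrArg _ (by ring_nf)]
        exact h
  have htop : stmt6cyc ((n - 3 : ℕ) : Fin (n + 1)) ((n : ℕ) : Fin (n + 1))
      ((n - 1 : ℕ) : Fin (n + 1)) ∈ G := by
    have h := hchain (m2 - 3) (by omega) (by omega)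
    rwa [show ((2 * (m2 - 3) + 3 : ℕ) : Fin (n + 1)) = ((n - 3 : ℕ) : Fin (n + 1)) from
        congrArg _ (by omega),
      show ((2 * (m2 - 3) + 6 : ℕ) : Fin (n + 1)) = ((n : ℕ) : Fin (n + 1)) from
        congrArg _ (by omega),
      show ((2 * (m2 - 3) + 5 : ℕ) : Fin (n + 1)) = ((n - 1 : ℕ) : Fin (n + 1)) from
        congrArg _ (by omega)] at h
  have hfin : stmt6cyc ((n - 1 : ℕ) : Fin (n + 1)) ((3 : ℕ) : Fin (n + 1))
      ((4 : ℕ) : Fin (n + 1)) ∈ G := by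
    have h := hconjG aw hawG _ _ _ htop
    rw [hamid (n - 3) (by omega) (by omega), han, han1,
      show ((n - 3 + 2 : ℕ) : Fin (n + 1)) = ((n - 1 : ℕ) : Fin (n + 1)) from
        congrArg _ (by omega)] at h
    exact h
  -- reaching all odd points
  have hodd : ∀ k : ℕ, 1 ≤ k → 2 * k + 3 ≤ n - 1 →
      stmt6cyc ((2 : ℕ) : Fin (n + 1)) ((6 : ℕ) : Fin (n + 1))
        ((2 * k + 3 : ℕ) : Fin (n + 1)) ∈ G := by
    intro k
    induction k with
    | zero => intro h1 _; exact absurd h1 (by omega)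
    | succ m ih =>
      intro _ h2
      rcases Nat.eq_zero_or_pos m with rfl | hm
      · rw [show ((2 * (0 + 1) + 3 : ℕ) : Fin (n + 1)) = ((5 : ℕ) : Fin (n + 1)) from
            congrArg _ (by norm_num)]
        exact hu0G
      · have ht := hchain m (by omega) (by omega)
        have hprev := ih (by omega) (by omega)
        have h := hconjG _ (inv_mem ht) _ _ _ hprev
        rw [stmt6_inv_apply (stmt6cyc_fix (hEne 2 (2 * m + 3) (by omega) (by omega) (by omega))
            (hEne 2 (2 * m + 6) (by omega) (by omega) (by omega))
            (hEne 2 (2 * m + 5) (by omega) (by omega) (by omega))),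
          stmt6_inv_apply (stmt6cyc_fix (hEne 6 (2 * m + 3) (by omega) (by omega) (by omega))
            (hEne 6 (2 * m + 6) (by omega) (by omega) (by omega))
            (hEne 6 (2 * m + 5) (by omega) (by omega) (by omega))),
          stmt6_inv_apply stmt6cyc_right] at h
        rw [show ((2 * (m + 1) + 3 : ℕ) : Fin (n + 1)) = ((2 * m + 5 : ℕ) : Fin (n + 1)) from
            congrArg _ (by ring_nf)]
        exact h
  -- reaching all even points ≥ 8
  have hevn : ∀ k : ℕ, 1 ≤ k → 2 * k + 6 ≤ n →
      stmt6cyc ((2 : ℕ) : Fin (n + 1)) ((6 : ℕ) : Fin (n + 1))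
        ((2 * k + 6 : ℕ) : Fin (n + 1)) ∈ G := by
    intro k h1 h2
    have ht := hchain k h1 h2
    have hprev := hodd k h1 (by omega)
    have h := hconjG _ ht _ _ _ hprev
    rw [stmt6cyc_fix (hEne 2 (2 * k + 3) (by omega) (by omega) (by omega))
        (hEne 2 (2 * k + 6) (by omega) (by omega) (by omega))
        (hEne 2 (2 * k + 5) (by omega) (by omega) (by omega)),
      stmt6cyc_fix (hEne 6 (2 * k + 3) (by omega) (by omega) (by omega))
        (hEne 6 (2 * k + 6) (by omega) (by omega) (by omega))
        (hEne 6 (2 * k + 5) (by omega) (by omega) (by omega)),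
      stmt6cyc_left (hEne (2 * k + 3) (2 * k + 6) (by omega) (by omega) (by omega))
        (hEne (2 * k + 3) (2 * k + 5) (by omega) (by omega) (by omega))] at h
    exact h
  -- reaching 3 and 4
  have hn1G : stmt6cyc ((2 : ℕ) : Fin (n + 1)) ((6 : ℕ) : Fin (n + 1))
      ((n - 1 : ℕ) : Fin (n + 1)) ∈ G := by
    have h := hodd (m2 - 2) (by omega) (by omega)
    rwa [show ((2 * (m2 - 2) + 3 : ℕ) : Fin (n + 1)) = ((n - 1 : ℕ) : Fin (n + 1)) from
      congrArg _ (by omega)] at h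
  have h3G : stmt6cyc ((2 : ℕ) : Fin (n + 1)) ((6 : ℕ) : Fin (n + 1))
      ((3 : ℕ) : Fin (n + 1)) ∈ G := by
    have h := hconjG _ hfin _ _ _ hn1G
    rw [stmt6cyc_fix (hEne 2 (n - 1) (by omega) (by omega) (by omega))
        (hEne 2 3 (by omega) (by omega) (by omega)) (hEne 2 4 (by omega) (by omega) (by omega)),
      stmt6cyc_fix (hEne 6 (n - 1) (by omega) (by omega) (by omega))
        (hEne 6 3 (by omega) (by omega) (by omega)) (hEne 6 4 (by omega) (by omega) (by omega)),
      stmt6cyc_left (hEne (n - 1) 3 (by omega) (by omega) (by omega))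
        (hEne (n - 1) 4 (by omega) (by omega) (by omega))] at h
    exact h
  have h4G : stmt6cyc ((2 : ℕ) : Fin (n + 1)) ((6 : ℕ) : Fin (n + 1))
      ((4 : ℕ) : Fin (n + 1)) ∈ G := by
    have h := hconjG _ hfin _ _ _ h3G
    rw [stmt6cyc_fix (hEne 2 (n - 1) (by omega) (by omega) (by omega))
        (hEne 2 3 (by omega) (by omega) (by omega)) (hEne 2 4 (by omega) (by omega) (by omega)),
      stmt6cyc_fix (hEne 6 (n - 1) (by omega) (by omega) (by omega))
        (hEne 6 3 (by omega) (by omega) (by omega)) (hEne 6 4 (by omega) (by omega) (by omega)),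
      stmt6cyc_mid (hEne 4 (n - 1) (by omega) (by omega) (by omega))
        (hEne 4 3 (by omega) (by omega) (by omega))] at h
    exact h
  -- the full family (2 6 x)
  have hfam : ∀ x : ℕ, 3 ≤ x → x ≤ n → x ≠ 6 →
      stmt6cyc ((2 : ℕ) : Fin (n + 1)) ((6 : ℕ) : Fin (n + 1)) ((x : ℕ) : Fin (n + 1)) ∈ G := by
    intro x h3 hxn h6
    rcases eq_or_ne x 3 with rfl | hx3
    · exact h3G
    rcases eq_or_ne x 4 with rfl | hx4
    · exact h4G
    rcases eq_or_ne x 5 with rfl | hx5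
    · exact hu0G
    rcases Nat.even_or_odd x with ⟨j, hj⟩ | ⟨j, hj⟩
    · have h := hevn (j - 3) (by omega) (by omega)
      rwa [show ((2 * (j - 3) + 6 : ℕ) : Fin (n + 1)) = ((x : ℕ) : Fin (n + 1)) from
        congrArg _ (by omega)] at h
    · have h := hodd (j - 1) (by omega) (by omega)
      rwa [show ((2 * (j - 1) + 3 : ℕ) : Fin (n + 1)) = ((x : ℕ) : Fin (n + 1)) from
        congrArg _ (by omega)] at h
  -- all (2 x y)
  have hpair : ∀ x y : ℕ, 3 ≤ x → x ≤ n → 3 ≤ y → y ≤ n → x ≠ y →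
      stmt6cyc ((2 : ℕ) : Fin (n + 1)) ((x : ℕ) : Fin (n + 1)) ((y : ℕ) : Fin (n + 1)) ∈ G := by
    intro x y hx3 hxn hy3 hyn hxy
    rcases eq_or_ne x 6 with rfl | hx6
    · exact hfam y hy3 hyn (Ne.symm hxy)
    rcases eq_or_ne y 6 with rfl | hy6
    · have h := hfam x hx3 hxn hx6
      rw [← stmt6cyc_inv (hEne 2 6 (by omega) (by omega) (by omega))
        (hEne 6 x (by omega) (by omega) (by omega)) (hEne x 2 (by omega) (by omega) (by omega))]
      exact inv_mem h
    · have h := mul_mem (hfam y hy3 hyn hy6) (inv_mem (hfam x hx3 hxn hx6))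
      rwa [stmt6cyc_mul_inv (hEne 2 6 (by omega) (by omega) (by omega))
        (hEne 2 y (by omega) (by omega) (by omega)) (hEne 2 x (by omega) (by omega) (by omega))
        (hEne 6 y (by omega) (by omega) (by omega)) (hEne 6 x (by omega) (by omega) (by omega))
        (hEne y x (by omega) (by omega) (Ne.symm hxy))] at h
  -- all 3-cycles supported on {2,…,n}
  have hall : ∀ x y z : Fin (n + 1), 2 ≤ x.val → 2 ≤ y.val → 2 ≤ z.val →
      x ≠ y → y ≠ z → z ≠ x → stmt6cyc x y z ∈ G := by
    intro x y z hx hy hz hxy hyz hzx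
    obtain ⟨i, hi, rfl⟩ : ∃ i, i ≤ n ∧ x = ((i : ℕ) : Fin (n + 1)) :=
      ⟨x.val, Fin.is_le x, (hself x).symm⟩
    obtain ⟨j, hj, rfl⟩ : ∃ j, j ≤ n ∧ y = ((j : ℕ) : Fin (n + 1)) :=
      ⟨y.val, Fin.is_le y, (hself y).symm⟩
    obtain ⟨k, hk, rfl⟩ : ∃ k, k ≤ n ∧ z = ((k : ℕ) : Fin (n + 1)) :=
      ⟨z.val, Fin.is_le z, (hself z).symm⟩
    rw [hEv i hi] at hx
    rw [hEv j hj] at hy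
    rw [hEv k hk] at hz
    have hij : i ≠ j := fun h => hxy (by rw [h])
    have hjk : j ≠ k := fun h => hyz (by rw [h])
    have hki : k ≠ i := fun h => hzx (by rw [h])
    rcases eq_or_ne i 2 with rfl | hi2
    · exact hpair j k (by omega) hj (by omega) hk hjk
    rcases eq_or_ne j 2 with rfl | hj2
    · rw [stmt6cyc_rotate (hEne i 2 (by omega) (by omega) (by omega))
        (hEne 2 k (by omega) (by omega) (by omega)) (hEne k i (by omega) (by omega) hki)]
      exact hpair k i (by omega) hk (by omega) hi (by omega)
    rcases eq_or_ne k 2 with rfl | hk2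
    · rw [stmt6cyc_rotate (hEne i j (by omega) (by omega) hij)
        (hEne j 2 (by omega) (by omega) (by omega)) (hEne 2 i (by omega) (by omega) (by omega)),
        stmt6cyc_rotate (hEne j 2 (by omega) (by omega) (by omega))
        (hEne 2 i (by omega) (by omega) (by omega)) (hEne i j (by omega) (by omega) hij)]
      exact hpair i j (by omega) hi (by omega) hj hij
    · have hw : ∃ w : ℕ, 3 ≤ w ∧ w ≤ 6 ∧ w ≠ i ∧ w ≠ j ∧ w ≠ k := by
        by_contra hno
        push_neg at hno
        have h3 := hno 3 (by omega) (by omega)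
        have h4 := hno 4 (by omega) (by omega)
        have h5 := hno 5 (by omega) (by omega)
        have h6 := hno 6 (by omega) (by omega)
        omega
      obtain ⟨w, hw3, hw6, hwi, hwj, hwk⟩ := hw
      have hg : stmt6cyc ((2 : ℕ) : Fin (n + 1)) ((i : ℕ) : Fin (n + 1))
          ((w : ℕ) : Fin (n + 1)) ∈ G := hpair i w (by omega) hi (by omega) (by omega) (Ne.symm hwi)
      have hin : stmt6cyc ((2 : ℕ) : Fin (n + 1)) ((j : ℕ) : Fin (n + 1))
          ((k : ℕ) : Fin (n + 1)) ∈ G := hpair j k (by omega) hj (by omega) hk hjk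
      have h := hconjG _ hg _ _ _ hin
      rw [stmt6cyc_left (hEne 2 i (by omega) (by omega) (by omega))
          (hEne 2 w (by omega) (by omega) (by omega)),
        stmt6cyc_fix (hEne j 2 (by omega) (by omega) (by omega))
          (hEne j i (by omega) (by omega) (Ne.symm hij)) (hEne j w (by omega) (by omega) (Ne.symm hwj)),
        stmt6cyc_fix (hEne k 2 (by omega) (by omega) (by omega))
          (hEne k i (by omega) (by omega) hki) (hEne k w (by omega) (by omega) (Ne.symm hwk))] at h
      exact h
  -- now the equivalence
  constructor
  · intro hσ
    refine Subgroup.closure_induction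
      (p := fun g _ => Equiv.Perm.sign g = 1 ∧ ∀ x : Fin (n + 1), x.val < 2 → g x = x)
      ?_ ?_ ?_ ?_ hσ
    · intro g hg
      have hlow : ∀ (f : Equiv.Perm (Fin (n + 1))),
          (f ((0 : ℕ) : Fin (n + 1)) = ((0 : ℕ) : Fin (n + 1))) →
          (f ((1 : ℕ) : Fin (n + 1)) = ((1 : ℕ) : Fin (n + 1))) →
          ∀ x : Fin (n + 1), x.val < 2 → f x = x := by
        intro f h0 h1 x hx
        have hx0 : x = ((x.val : ℕ) : Fin (n + 1)) := (hself x).symm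
        rcases (by omega : x.val = 0 ∨ x.val = 1) with h | h
        · rw [hx0, h]; exact h0
        · rw [hx0, h]; exact h1
      simp only [Set.mem_insert_iff, Set.mem_singleton_iff] at hg
      rcases hg with rfl | rfl | rfl
      · constructor
        · rw [haw_def, map_pow]
          rcases Int.units_eq_one_or (Equiv.Perm.sign (γ⁻¹ * δ)) with h | h <;> rw [h] <;> norm_num
        · exact hlow _ ha0 ha1
      · constructor
        · rw [hrw_def]
          simp only [map_mul, map_inv]
          rcases Int.units_eq_one_or (Equiv.Perm.sign γ) with h | h <;>
            rcases Int.units_eq_one_or (Equiv.Perm.sign δ) with h' | h' <;>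
            rw [h, h'] <;> norm_num
        · exact hlow _ hr0 hr1
      · constructor
        · rw [hqw_def, hrw_def]
          simp only [map_mul, map_inv]
          rcases Int.units_eq_one_or (Equiv.Perm.sign γ) with h | h <;>
            rcases Int.units_eq_one_or (Equiv.Perm.sign δ) with h' | h' <;>
            rw [h, h'] <;> norm_num
        · exact hlow _ hc0 hc1
    · exact ⟨map_one _, fun x _ => rfl⟩
    · intro p' q' _ _ hp hq
      exact ⟨by rw [map_mul, hp.1, hq.1, one_mul],
        fun x hx => by rw [Equiv.Perm.mul_apply, hq.2 x hx, hp.2 x hx]⟩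
    · intro p' _ hp
      exact ⟨by rw [map_inv, hp.1, inv_one], fun x hx => stmt6_inv_apply (hp.2 x hx)⟩
  · rintro ⟨hsign, hfix⟩
    have h₁ : ∀ x : Fin (n + 1), 2 ≤ (σ x).val ↔ 2 ≤ x.val := by
      intro x
      rw [iff_comm]
      constructor
      · intro h2
        by_contra hlt
        push_neg at hlt
        have hs : σ (σ x) = σ x := hfix (σ x) (by omega)
        have hs2 : σ x = x := σ.injective hs
        rw [hs2] at hlt
        omega
      · intro h2
        by_contra hlt
        push_neg at hlt
        rw [hfix x (by omega)] at h2
        omega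
    have hof : Equiv.Perm.ofSubtype (σ.subtypePerm h₁) = σ :=
      Equiv.Perm.ofSubtype_subtypePerm (p := fun x : Fin (n + 1) => 2 ≤ x.val) h₁ (fun x hx => by
        by_contra h
        simp only [not_le] at h
        exact hx (hfix x (by omega)))
    have hτA : σ.subtypePerm h₁ ∈ alternatingGroup {x : Fin (n + 1) // 2 ≤ x.val} := by
      rw [Equiv.Perm.mem_alternatingGroup, ← Equiv.Perm.sign_ofSubtype, hof]
      exact hsign
    rw [← Equiv.Perm.closure_three_cycles_eq_alternating] at hτA
    have hmem : σ ∈ (Subgroup.closure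
        {υ : Equiv.Perm {x : Fin (n + 1) // 2 ≤ x.val} | υ.IsThreeCycle}).map
        Equiv.Perm.ofSubtype := ⟨σ.subtypePerm h₁, hτA, hof⟩
    rw [MonoidHom.map_closure] at hmem
    refine (Subgroup.closure_le _).mpr ?_ hmem
    rintro _ ⟨υ, hυ, rfl⟩
    obtain ⟨u, v, w, huv, hvw, hwu, rfl⟩ := stmt6_threeCycle_ex hυ
    have hcast : Equiv.Perm.ofSubtype (stmt6cyc u v w) =
        stmt6cyc (u : Fin (n + 1)) (v : Fin (n + 1)) (w : Fin (n + 1)) := by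
      rw [stmt6cyc, map_mul, Equiv.Perm.ofSubtype_swap_eq, Equiv.Perm.ofSubtype_swap_eq]
      rfl
    show Equiv.Perm.ofSubtype (stmt6cyc u v w) ∈ G
    rw [hcast]
    exact hall _ _ _ u.2 v.2 w.2 (fun h => huv (Subtype.ext h)) (fun h => hvw (Subtype.ext h))
      (fun h => hwu (Subtype.ext h))
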